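/- arXiv:1012.5535 — 2 statements merged into one kernel-verified Lean document; each statement's English description precedes it below -/
import Mathlib

section
/- For every non-dyadic x ∈ [0,1] with binary digits ε_n, if p_k denotes the position of the k-th 0 in the expansion, then L_a(x + 2^{-p_k}) − L_a(x) = a^k (1-a)^{p_k - k} C_1(x,k), where C_1(x,k) satisfies min{1, (1-a)/a} ≤ C_1(x,k) ≤ max{1, (1-a)/a}. -/
open Topology Filter Set

/-- The de Rham functional equation characterizing Lebesgue's singular function `L_a`
on `[0,1]`, together with continuity. -/
def deRham (a : ℝ) (L : ℝ → ℝ) : Prop :=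
  ContinuousOn L (Set.Icc 0 1) ∧
  (∀ x ∈ Set.Icc (0:ℝ) (1/2), L x = a * L (2*x)) ∧
  (∀ x ∈ Set.Icc (1/2:ℝ) 1, L x = (1-a) * L (2*x - 1) + a)

lemma L_zero (a : ℝ) (ha1 : a < 1) (L : ℝ → ℝ) (hL : deRham a L) : L 0 = 0 := by
  have h := hL.2.1 0 (by constructor <;> norm_num)
  simp at h
  nlinarith [h]

lemma L_one (a : ℝ) (ha0 : 0 < a) (L : ℝ → ℝ) (hL : deRham a L) : L 1 = 1 := by
  have h := hL.2.2 1 (by constructor <;> norm_num)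
  norm_num at h
  nlinarith [h]

lemma L_mem (a : ℝ) (ha0 : 0 < a) (ha1 : a < 1) (L : ℝ → ℝ) (hL : deRham a L) :
    ∀ y ∈ Icc (0:ℝ) 1, L y ∈ Icc (0:ℝ) 1 := by
  obtain ⟨hc, eq0, eq1⟩ := hL
  have hcpt : IsCompact (Icc (0:ℝ) 1) := isCompact_Icc
  have hne : (Icc (0:ℝ) 1).Nonempty := ⟨0, by norm_num⟩
  obtain ⟨xM, hxM, hmax⟩ := hcpt.exists_isMaxOn hne hc
  obtain ⟨xm, hxm, hmin⟩ := hcpt.exists_isMinOn hne hc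
  have h1 : L 1 = 1 := L_one a ha0 L ⟨hc, eq0, eq1⟩
  have hMle : L xM ≤ 1 := by
    rcases le_or_gt xM (1/2) with hc2 | hc2
    · have h := eq0 xM ⟨hxM.1, hc2⟩
      have h2 : (2*xM) ∈ Icc (0:ℝ) 1 := ⟨by linarith [hxM.1], by linarith⟩
      have h3 : L (2*xM) ≤ L xM := hmax h2
      have h1M : L 1 ≤ L xM := hmax (show (1:ℝ) ∈ Icc (0:ℝ) 1 by norm_num)
      rw [h1] at h1M
      nlinarith
    · have h := eq1 xM ⟨le_of_lt hc2, hxM.2⟩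
      have h2 : (2*xM - 1) ∈ Icc (0:ℝ) 1 := ⟨by linarith, by linarith [hxM.2]⟩
      have h3 : L (2*xM - 1) ≤ L xM := hmax h2
      nlinarith
  have hmge : 0 ≤ L xm := by
    rcases le_or_gt xm (1/2) with hc2 | hc2
    · have h := eq0 xm ⟨hxm.1, hc2⟩
      have h2 : (2*xm) ∈ Icc (0:ℝ) 1 := ⟨by linarith [hxm.1], by linarith⟩
      have h3 : L xm ≤ L (2*xm) := hmin h2
      nlinarith
    · have h := eq1 xm ⟨le_of_lt hc2, hxm.2⟩
      have h2 : (2*xm - 1) ∈ Icc (0:ℝ) 1 := ⟨by linarith, by linarith [hxm.2]⟩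
      have h3 : L xm ≤ L (2*xm - 1) := hmin h2
      nlinarith
  intro y hy
  exact ⟨le_trans hmge (hmin hy), le_trans (hmax hy) hMle⟩


lemma geom_sum_half (p : ℕ) : ∑ n ∈ Finset.range p, ((1:ℝ)/2)^(n+1) = 1 - (1/2)^p := by
  induction p with
  | zero => simp
  | succ p ih => rw [Finset.sum_range_succ, ih]; ring

lemma digit_sum_nonneg (d : ℕ → ℕ) (p : ℕ) :
    0 ≤ ∑ n ∈ Finset.range p, (d (n+1) : ℝ) / 2^(n+1) :=
  Finset.sum_nonneg fun n _ => by positivity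

lemma digit_sum_le (d : ℕ → ℕ) (hd : ∀ n, d n ≤ 1) (p : ℕ) :
    ∑ n ∈ Finset.range p, (d (n+1) : ℝ) / 2^(n+1) ≤ 1 - (1/2)^p := by
  rw [← geom_sum_half p]
  apply Finset.sum_le_sum
  intro n _
  have : (d (n+1) : ℝ) ≤ 1 := by exact_mod_cast hd (n+1)
  rw [div_le_iff₀ (by positivity)]
  calc (d (n+1):ℝ) ≤ 1 := this
    _ = ((1:ℝ)/2)^(n+1) * 2^(n+1) := by rw [div_pow]; field_simp; exact (one_pow _).symm

lemma self_similar (a : ℝ) (ha0 : 0 < a) (ha1 : a < 1) (L : ℝ → ℝ) (hL : deRham a L)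
    (hL0 : L 0 = 0) :
    ∀ (p : ℕ) (d : ℕ → ℕ), (∀ n, d n ≤ 1) → ∀ y ∈ Icc (0:ℝ) 1,
    L ((∑ n ∈ Finset.range p, (d (n+1):ℝ)/2^(n+1)) + y / 2^p)
    = L (∑ n ∈ Finset.range p, (d (n+1):ℝ)/2^(n+1))
      + (∏ n ∈ Finset.range p, (if d (n+1) = 0 then a else 1-a)) * L y := by
  obtain ⟨_, eq0, eq1⟩ := hL
  intro p
  induction p with
  | zero => intro d _ y _; simp [hL0]
  | succ p ih =>
    intro d hd y hy
    set d' : ℕ → ℕ := fun n => d (n+1) with hd'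
    have hd'le : ∀ n, d' n ≤ 1 := fun n => hd (n+1)
    have hsum : ∑ n ∈ Finset.range (p+1), (d (n+1):ℝ)/2^(n+1)
        = (d 1 : ℝ)/2 + (∑ n ∈ Finset.range p, (d' (n+1):ℝ)/2^(n+1)) / 2 := by
      rw [Finset.sum_range_succ' (fun n => (d (n+1):ℝ)/2^(n+1)) p, Finset.sum_div, add_comm]
      congr 1
      · norm_num
      · exact Finset.sum_congr rfl fun n _ => by rw [pow_succ]; ring
    set S := ∑ n ∈ Finset.range p, (d' (n+1):ℝ)/2^(n+1) with hS
    have hS0 : 0 ≤ S := digit_sum_nonneg d' p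
    have hS1 : S ≤ 1 - (1/2)^p := digit_sum_le d' hd'le p
    have hy2 : 0 ≤ y / 2^p ∧ y / 2^p ≤ (1/2)^p := by
      constructor
      · exact div_nonneg hy.1 (by positivity)
      · rw [div_le_iff₀ (by positivity : (0:ℝ) < 2^p)]
        calc y ≤ 1 := hy.2
          _ = ((1:ℝ)/2)^p * 2^p := by rw [div_pow]; field_simp; exact (one_pow _).symm
    set u := S + y / 2^p with hu
    have hu01 : u ∈ Icc (0:ℝ) 1 := ⟨by simp only [hu]; linarith [hy2.1],
      by simp only [hu]; linarith [hy2.2]⟩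
    have harg : (∑ n ∈ Finset.range (p+1), (d (n+1):ℝ)/2^(n+1)) + y / 2^(p+1)
        = (d 1:ℝ)/2 + u/2 := by
      rw [hsum, hu, pow_succ]
      ring
    have hprod : (∏ n ∈ Finset.range (p+1), (if d (n+1) = 0 then a else 1-a))
        = (∏ n ∈ Finset.range p, (if d' (n+1) = 0 then a else 1-a)) * (if d 1 = 0 then a else 1-a) := by
      rw [Finset.prod_range_succ' (fun n => if d (n+1) = 0 then a else 1-a) p]
    have ihu := ih d' hd'le y hy
    rw [harg, hsum, hprod]
    have hd1 := hd 1
    have hLu : L u = L S + (∏ n ∈ Finset.range p, if d' (n+1) = 0 then a else 1-a) * L y :=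
      ihu
    interval_cases h : d 1
    · -- d 1 = 0
      have e1 : L (u/2) = a * L u := by
        have := eq0 (u/2) ⟨by linarith [hu01.1], by linarith [hu01.2]⟩
        rwa [show 2*(u/2) = u by ring] at this
      have e2 : L (S/2) = a * L S := by
        have := eq0 (S/2) ⟨by linarith, by linarith [hu01.2, hy2.1]⟩
        rwa [show 2*(S/2) = S by ring] at this
      simp only [Nat.cast_zero, zero_div, zero_add, if_pos rfl, if_true]
      rw [e1, e2, hLu]
      ring
    · -- d 1 = 1
      have e1 : L (1/2 + u/2) = (1-a) * L u + a := by
        have := eq1 (1/2 + u/2) ⟨by linarith [hu01.1], by linarith [hu01.2]⟩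
        rwa [show 2*(1/2 + u/2) - 1 = u by ring] at this
      have e2 : L (1/2 + S/2) = (1-a) * L S + a := by
        have := eq1 (1/2 + S/2) ⟨by linarith, by linarith [hu01.2, hy2.1]⟩
        rwa [show 2*(1/2 + S/2) - 1 = S by ring] at this
      simp only [Nat.cast_one, if_neg (by norm_num : ¬ (1:ℕ) = 0)]
      rw [e1, e2, hLu]
      ring

section Helpers

lemma summable_digit (d : ℕ → ℕ) (hd : ∀ n, d n ≤ 1) :
    Summable (fun n => (d (n+1) : ℝ) / 2^(n+1)) := by
  have hgeom : Summable (fun n : ℕ => ((1:ℝ)/2)^(n+1)) := by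
    have := (summable_geometric_two).mul_right ((1:ℝ)/2)
    exact this.congr fun n => by rw [pow_succ]
  apply Summable.of_nonneg_of_le (fun n => by positivity) (fun n => ?_) hgeom
  have h1 : (d (n+1) : ℝ) ≤ 1 := by exact_mod_cast hd (n+1)
  rw [div_pow, one_pow, div_le_div_iff₀ (by positivity) (by positivity)]
  nlinarith [pow_pos (by norm_num : (0:ℝ) < 2) (n+1)]

lemma tsum_half_pow : ∑' n : ℕ, ((1:ℝ)/2)^(n+1) = 1 := by
  exact (tsum_congr fun n => by rw [pow_succ, div_pow, one_pow]; ring).trans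
    (tsum_geometric_two' 1)

lemma digit_tsum_mem (d : ℕ → ℕ) (hd : ∀ n, d n ≤ 1) :
    (∑' n : ℕ, (d (n+1) : ℝ) / 2^(n+1)) ∈ Icc (0:ℝ) 1 := by
  constructor
  · exact tsum_nonneg fun n => by positivity
  · rw [← tsum_half_pow]
    have hgeom : Summable (fun n : ℕ => ((1:ℝ)/2)^(n+1)) := by
      have := (summable_geometric_two).mul_right ((1:ℝ)/2)
      exact this.congr fun n => by rw [pow_succ]
    apply Summable.tsum_le_tsum _ (summable_digit d hd) hgeom
    intro n
    have h1 : (d (n+1) : ℝ) ≤ 1 := by exact_mod_cast hd (n+1)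
    rw [div_pow, one_pow, div_le_div_iff₀ (by positivity) (by positivity)]
    nlinarith [pow_pos (by norm_num : (0:ℝ) < 2) (n+1)]

end Helpers


lemma zero_filter_card (ε : ℕ → ℕ) (p : ℕ → ℕ) (hp1 : ∀ k, 1 ≤ p k) (hpm : StrictMono p)
    (hp0 : ∀ k, ε (p k) = 0) (hpsurj : ∀ n, 1 ≤ n → ε n = 0 → ∃ k, p k = n) (k m : ℕ)
    (hm : p k = m + 1) :
    ((Finset.range m).filter (fun n => ε (n+1) = 0)).card = k := by
  have hset : (Finset.range m).filter (fun n => ε (n+1) = 0)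
      = (Finset.range k).image (fun j => p j - 1) := by
    ext n
    simp only [Finset.mem_filter, Finset.mem_range, Finset.mem_image]
    constructor
    · rintro ⟨hn, hz⟩
      obtain ⟨j, hj⟩ := hpsurj (n+1) (by omega) hz
      refine ⟨j, ?_, by omega⟩
      exact hpm.lt_iff_lt.mp (by omega)
    · rintro ⟨j, hj, hjn⟩
      have h1 := hp1 j
      have h2 : p j < p k := hpm hj
      refine ⟨by omega, ?_⟩
      have hnj : n + 1 = p j := by omega
      rw [hnj]; exact hp0 j
  rw [hset, Finset.card_image_of_injOn, Finset.card_range]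
  intro i hi j hj hij
  simp only at hij
  have hi1 := hp1 i; have hj1 := hp1 j
  exact hpm.injective (by omega)

lemma prod_ite_count (a : ℝ) (ε : ℕ → ℕ) (m c : ℕ)
    (hc : ((Finset.range m).filter (fun n => ε (n+1) = 0)).card = c) :
    (∏ n ∈ Finset.range m, (if ε (n+1) = 0 then a else 1-a)) = a^c * (1-a)^(m - c) := by
  rw [Finset.prod_ite, Finset.prod_const, Finset.prod_const, hc]
  have h := Finset.card_filter_add_card_filter_not
    (s := Finset.range m) (p := fun n => ε (n+1) = 0)
  rw [Finset.card_range] at h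
  congr 2
  omega

theorem key_increment_formula (a : ℝ) (ha0 : 0 < a) (ha1 : a < 1)
    (ha : a ≠ 1/2) (L : ℝ → ℝ) (hL : deRham a L)
    (ε : ℕ → ℕ) (hε : ∀ n, ε n ≤ 1)
    (hinf1 : ∀ N, ∃ n ≥ N, ε n = 1)
    (x : ℝ) (hx : x = ∑' n : ℕ, (ε (n+1) : ℝ) / 2 ^ (n+1))
    (p : ℕ → ℕ) (hp1 : ∀ k, 1 ≤ p k) (hpm : StrictMono p)
    (hp0 : ∀ k, ε (p k) = 0)
    (hpsurj : ∀ n, 1 ≤ n → ε n = 0 → ∃ k, p k = n) (k : ℕ) :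
    ∃ C1 : ℝ, min 1 ((1-a)/a) ≤ C1 ∧ C1 ≤ max 1 ((1-a)/a) ∧
      L (x + (1/2) ^ (p k)) - L x = a ^ (k+1) * (1-a) ^ (p k - (k+1)) * C1 := by
  have hL0 : L 0 = 0 := L_zero a ha1 L hL
  obtain ⟨m, hm⟩ : ∃ m, p k = m + 1 := ⟨p k - 1, by have := hp1 k; omega⟩
  -- k + 1 ≤ p k
  have hpk : ∀ j, j + 1 ≤ p j := by
    intro j
    induction j with
    | zero => exact hp1 0
    | succ n ihn => have h2 : p n < p (n+1) := hpm (by omega); omega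
  have hkm : k ≤ m := by have := hpk k; omega
  -- tail t
  set q := p k with hq
  set t : ℝ := ∑' i : ℕ, (ε (q + i + 1) : ℝ) / 2^(i+1) with ht
  have htmem : t ∈ Icc (0:ℝ) 1 := digit_tsum_mem (fun i => ε (q + i)) (fun i => hε _)
  -- split x
  have hsumm : Summable (fun n => (ε (n+1) : ℝ) / 2^(n+1)) := summable_digit ε hε
  have hsplit : x = (∑ n ∈ Finset.range q, (ε (n+1):ℝ)/2^(n+1)) + t * (1/2)^q := by
    rw [hx, ← hsumm.sum_add_tsum_nat_add q]
    congr 1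
    rw [ht, ← tsum_mul_right]
    apply tsum_congr
    intro i
    have hidx : i + q + 1 = q + i + 1 := by omega
    rw [hidx, show q + i + 1 = (i+1) + q by omega, pow_add, one_div, inv_pow, pow_add]
    field_simp
  have hε0 : ε (m+1) = 0 := by rw [← hm]; exact hp0 k
  set D := ∑ n ∈ Finset.range m, (ε (n+1):ℝ)/2^(n+1) with hD
  have hxD : x = D + (t/2)/2^m := by
    rw [hsplit, hm, Finset.sum_range_succ, hε0, ← hD]
    push_cast
    rw [div_pow, one_pow]
    field_simp
    ring
  have hx2D : x + (1/2)^q = D + ((1+t)/2)/2^m := by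
    rw [hxD, hm]
    rw [div_pow, one_pow]
    field_simp
    ring
  -- apply self-similarity
  have ht2 : t/2 ∈ Icc (0:ℝ) 1 := ⟨by linarith [htmem.1], by linarith [htmem.2]⟩
  have ht3 : (1+t)/2 ∈ Icc (0:ℝ) 1 := ⟨by linarith [htmem.1], by linarith [htmem.2]⟩
  have e1 := self_similar a ha0 ha1 L hL hL0 m ε hε (t/2) ht2
  have e2 := self_similar a ha0 ha1 L hL hL0 m ε hε ((1+t)/2) ht3
  set PP := ∏ n ∈ Finset.range m, (if ε (n+1) = 0 then a else 1-a) with hP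
  -- values of L at t/2 and (1+t)/2
  obtain ⟨hc, eq0, eq1⟩ := hL
  have f1 : L (t/2) = a * L t := by
    have := eq0 (t/2) ⟨by linarith [htmem.1], by linarith [htmem.2]⟩
    rwa [show 2*(t/2) = t by ring] at this
  have f2 : L ((1+t)/2) = (1-a) * L t + a := by
    have := eq1 ((1+t)/2) ⟨by linarith [htmem.1], by linarith [htmem.2]⟩
    rwa [show 2*((1+t)/2) - 1 = t by ring] at this
  have hLt : L t ∈ Icc (0:ℝ) 1 := L_mem a ha0 ha1 L ⟨hc, eq0, eq1⟩ t htmem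
  -- the product value
  have hcard := zero_filter_card ε p hp1 hpm hp0 hpsurj k m hm
  have hPval : PP = a^k * (1-a)^(m-k) := prod_ite_count a ε m k hcard
  -- the increment
  have hdiff : L (x + (1/2)^q) - L x = PP * (a + (1-2*a) * L t) := by
    rw [hx2D, e2, hxD, e1, f1, f2]
    ring
  -- define C1
  refine ⟨(1 - L t) + ((1-a)/a) * L t, ?_, ?_, ?_⟩
  · rcases le_total (1:ℝ) ((1-a)/a) with h | h
    · rw [min_eq_left h]
      nlinarith [hLt.1, hLt.2]
    · rw [min_eq_right h]
      nlinarith [hLt.1, hLt.2]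
  · rcases le_total (1:ℝ) ((1-a)/a) with h | h
    · rw [max_eq_right h]
      nlinarith [hLt.1, hLt.2]
    · rw [max_eq_left h]
      nlinarith [hLt.1, hLt.2]
  · rw [hdiff, hPval]
    have hexp : q - (k+1) = m - k := by omega
    rw [hexp, pow_succ]
    have hane : a ≠ 0 := ne_of_gt ha0
    field_simp
    ring
end

section
/- Let x be non-dyadic with digit densities D_0(x), D_1(x) ∈ (0,1), let p_k and q_k be the positions of the k-th 0 and k-th 1 respectively in the binary expansion of x, and set f(k) = p_k − k/D_0(x), g(k) = k/D_1(x) − q_k. If f(k) → +∞ as k → ∞, then g(k) → +∞. -/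
open Topology Filter Set

/-- Sum is constant over a stretch of zeros. -/
lemma aux_flat (ε : ℕ → ℕ) (a b : ℕ) (hab : a ≤ b)
    (h0 : ∀ j, a < j → j ≤ b → ε j = 0) :
    ∑ j ∈ Finset.range b, ε (j+1) = ∑ j ∈ Finset.range a, ε (j+1) := by
  rw [Finset.range_eq_Ico, ← Finset.sum_Ico_consecutive _ (Nat.zero_le a) hab,
    ← Finset.range_eq_Ico]
  have : ∑ j ∈ Finset.Ico a b, ε (j+1) = 0 := by
    apply Finset.sum_eq_zero
    intro j hj
    rw [Finset.mem_Ico] at hj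
    exact h0 (j+1) (by omega) (by omega)
  omega

/-- The number of marked positions up to the `k`-th marked position is `k+1`. -/
lemma aux_count (ε : ℕ → ℕ) (hε : ∀ n, ε n ≤ 1) (q : ℕ → ℕ) (hq1 : ∀ k, 1 ≤ q k)
    (hqm : StrictMono q) (hq0 : ∀ k, ε (q k) = 1)
    (hqsurj : ∀ n, 1 ≤ n → ε n = 1 → ∃ k, q k = n) :
    ∀ k, ∑ j ∈ Finset.range (q k), ε (j+1) = k + 1 := by
  intro k
  induction k with
  | zero =>
    have hq : q 0 - 1 + 1 = q 0 := Nat.succ_pred_eq_of_pos (hq1 0)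
    rw [← hq, Finset.sum_range_succ, hq, hq0 0]
    have : ∑ j ∈ Finset.range (q 0 - 1), ε (j+1) = ∑ j ∈ Finset.range 0, ε (j+1) := by
      apply aux_flat ε 0 (q 0 - 1) (Nat.zero_le _)
      intro j hj1 hj2
      by_contra h
      have hj : ε j = 1 := by have := hε j; omega
      obtain ⟨i, hi⟩ := hqsurj j hj1 hj
      have : q 0 ≤ q i := hqm.monotone (Nat.zero_le i)
      omega
    rw [Finset.range_zero, Finset.sum_empty] at this
    omega
  | succ k ih =>
    have hq : q (k+1) - 1 + 1 = q (k+1) := Nat.succ_pred_eq_of_pos (hq1 (k+1))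
    rw [← hq, Finset.sum_range_succ, hq, hq0 (k+1)]
    have hlt : q k < q (k+1) := hqm (Nat.lt_succ_self k)
    have : ∑ j ∈ Finset.range (q (k+1) - 1), ε (j+1) = ∑ j ∈ Finset.range (q k), ε (j+1) := by
      apply aux_flat ε (q k) (q (k+1) - 1) (by omega)
      intro j hj1 hj2
      by_contra h
      have hj : ε j = 1 := by have := hε j; omega
      obtain ⟨i, hi⟩ := hqsurj j (by have := hq1 k; omega) hj
      have h1 : k < i := by have := hqm.lt_iff_lt (a := k) (b := i); omega
      have h2 : i < k + 1 := by have := hqm.lt_iff_lt (a := i) (b := k+1); omega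
      omega
    rw [this, ih]

/-- If at least `k+1` marks occur in `[1,n]`, then the `k`-th mark is `≤ n`. -/
lemma aux_inv (ε : ℕ → ℕ) (hε : ∀ n, ε n ≤ 1) (q : ℕ → ℕ) (hq1 : ∀ k, 1 ≤ q k)
    (hqm : StrictMono q) (hq0 : ∀ k, ε (q k) = 1)
    (hqsurj : ∀ n, 1 ≤ n → ε n = 1 → ∃ k, q k = n)
    (k n : ℕ) (h : k + 1 ≤ ∑ j ∈ Finset.range n, ε (j+1)) : q k ≤ n := by
  by_contra hn
  push_neg at hn
  have hmono : ∑ j ∈ Finset.range n, ε (j+1) ≤ ∑ j ∈ Finset.range (q k - 1), ε (j+1) :=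
    Finset.sum_le_sum_of_subset (Finset.range_subset_range.2 (by omega))
  have hq : q k - 1 + 1 = q k := Nat.succ_pred_eq_of_pos (hq1 k)
  have hcount := aux_count ε hε q hq1 hqm hq0 hqsurj k
  rw [← hq, Finset.sum_range_succ, hq, hq0 k] at hcount
  omega

theorem zero_positions_drift_iff_one_positions_drift
    (ε : ℕ → ℕ) (hε : ∀ n, ε n ≤ 1)
    (hinf1 : ∀ N, ∃ n ≥ N, ε n = 1) (hinf0 : ∀ N, ∃ n ≥ N, ε n = 0)
    (d1 : ℝ)
    (hd : Tendsto (fun n : ℕ => (∑ k ∈ Finset.range n, (ε (k+1) : ℝ)) / n)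
      atTop (𝓝 d1))
    (hd0 : 0 < d1) (hd1 : d1 < 1)
    (p : ℕ → ℕ) (hp1 : ∀ k, 1 ≤ p k) (hpm : StrictMono p)
    (hp0 : ∀ k, ε (p k) = 0)
    (hpsurj : ∀ n, 1 ≤ n → ε n = 0 → ∃ k, p k = n)
    (q : ℕ → ℕ) (hq1 : ∀ k, 1 ≤ q k) (hqm : StrictMono q)
    (hq0 : ∀ k, ε (q k) = 1)
    (hqsurj : ∀ n, 1 ≤ n → ε n = 1 → ∃ k, q k = n)
    (hf : Tendsto (fun k : ℕ => (p k : ℝ) - (k+1) / (1 - d1)) atTop atTop) :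
    Tendsto (fun k : ℕ => (k+1) / d1 - (q k : ℝ)) atTop atTop := by
  -- complementary digit sequence
  set ε' : ℕ → ℕ := fun n => 1 - ε n with hε'def
  have hε'le : ∀ n, ε' n ≤ 1 := fun n => Nat.sub_le _ _
  have hp0' : ∀ k, ε' (p k) = 1 := fun k => by simp [hε'def, hp0 k]
  have hpsurj' : ∀ n, 1 ≤ n → ε' n = 1 → ∃ k, p k = n := by
    intro n h1 h2
    exact hpsurj n h1 (by have := hε n; simp [hε'def] at h2; omega)
  -- counting functions
  set S : ℕ → ℕ := fun n => ∑ j ∈ Finset.range n, ε (j+1) with hSdef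
  set Z : ℕ → ℕ := fun n => ∑ j ∈ Finset.range n, ε' (j+1) with hZdef
  have hZS : ∀ n, Z n + S n = n := by
    intro n
    rw [hZdef, hSdef]
    simp only
    rw [← Finset.sum_add_distrib]
    have : ∀ j ∈ Finset.range n, ε' (j+1) + ε (j+1) = 1 := by
      intro j _
      have := hε (j+1)
      simp [hε'def]
      omega
    rw [Finset.sum_congr rfl this]
    simp
  have hSq : ∀ k, S (q k) = k + 1 := aux_count ε hε q hq1 hqm hq0 hqsurj
  have hZp : ∀ k, Z (p k) = k + 1 := aux_count ε' hε'le p hp1 hpm hp0' hpsurj'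
  set m : ℕ → ℕ := fun k => Z (q k) with hmdef
  have hmq : ∀ k, m k + (k+1) = q k := fun k => by
    have := hZS (q k); rw [hSq k] at this; exact this
  -- m tends to infinity
  have hZmono : Monotone Z := fun a b hab =>
    Finset.sum_le_sum_of_subset (Finset.range_subset_range.2 hab)
  have hZtend : Tendsto Z atTop atTop := by
    apply tendsto_atTop_atTop_of_monotone hZmono
    intro b
    exact ⟨p b, by rw [hZp b]; omega⟩
  have hmtend : Tendsto m atTop atTop := hZtend.comp hqm.tendsto_atTop
  -- key bound: p (m k - 1) ≤ q k - 1 when m k ≥ 1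
  have hkey : ∀ k, 1 ≤ m k → p (m k - 1) ≤ q k - 1 := by
    intro k hk
    apply aux_inv ε' hε'le p hp1 hpm hp0' hpsurj'
    have hq : q k - 1 + 1 = q k := Nat.succ_pred_eq_of_pos (hq1 k)
    have h1 : m k = ∑ j ∈ Finset.range (q k), ε' (j+1) := rfl
    have h2 : ∑ j ∈ Finset.range (q k), ε' (j+1)
        = ∑ j ∈ Finset.range (q k - 1), ε' (j+1) + ε' (q k) := by
      rw [← hq, Finset.sum_range_succ, hq]
    have hz : ε' (q k) = 0 := by simp [hε'def, hq0 k]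
    omega
  -- the comparison sequence
  have h1d1 : (0:ℝ) < 1 - d1 := by linarith
  have hc : (0:ℝ) < (1 - d1) / d1 := div_pos h1d1 hd0
  have hmtend1 : Tendsto (fun k => m k - 1) atTop atTop :=
    (tendsto_sub_atTop_nat 1).comp hmtend
  have h2 : Tendsto (fun k : ℕ => (p (m k - 1) : ℝ) - ((m k - 1 : ℕ)+1) / (1 - d1))
      atTop atTop := hf.comp hmtend1
  have htend2 : Tendsto (fun k : ℕ =>
      ((1 - d1) / d1) * (((p (m k - 1) : ℝ) - ((m k - 1 : ℕ)+1) / (1 - d1)) + 1))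
      atTop atTop :=
    (tendsto_atTop_add_const_right _ 1 h2).const_mul_atTop hc
  refine tendsto_atTop_mono' atTop ?_ htend2
  filter_upwards [hmtend.eventually_ge_atTop 1] with k hk
  have hpq : p (m k - 1) ≤ q k - 1 := hkey k hk
  have hq1k := hq1 k
  have hmqk := hmq k
  -- cast to reals
  have hP : (p (m k - 1) : ℝ) ≤ (q k : ℝ) - 1 := by
    have : (p (m k - 1) : ℝ) ≤ ((q k - 1 : ℕ) : ℝ) := Nat.cast_le.2 hpq
    rwa [Nat.cast_sub hq1k, Nat.cast_one] at this
  have hMcast : ((m k - 1 : ℕ) : ℝ) = (m k : ℝ) - 1 := by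
    rw [Nat.cast_sub hk, Nat.cast_one]
  have hmr : (m k : ℝ) = (q k : ℝ) - ((k : ℝ) + 1) := by
    have : ((m k : ℕ) : ℝ) + ((k : ℝ) + 1) = (q k : ℝ) := by
      exact_mod_cast congrArg (Nat.cast : ℕ → ℝ) hmqk
    linarith
  rw [hMcast, hmr]
  set P := (p (m k - 1) : ℝ)
  set n := (q k : ℝ)
  set K := (k : ℝ) + 1
  have hdiff : K / d1 - n - ((1 - d1) / d1 * ((P - (n - K - 1 + 1) / (1 - d1)) + 1))
      = (1 - d1) / d1 * (n - 1 - P) := by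
    field_simp
    ring
  have hnn : (0:ℝ) ≤ (1 - d1) / d1 * (n - 1 - P) :=
    mul_nonneg hc.le (by linarith)
  linarith [hdiff, hnn]
end
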